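/- Let R be a commutative ring with identity, let A = (a_{ij}) be an n×n matrix over R, and let k, m₁,…,m_n be nonnegative integers with m₁ ≤ ⋯ ≤ m_n ≤ k. Then the coefficient of x₁^k⋯x_n^k in per((a_{ij} x_j^{m_i})_{1≤i,j≤n}) · (x₁ + ⋯ + x_n)^{kn − ∑ m_i} equals (kn − ∑_{i=1}^n m_i)! / ∏_{i=1}^n (k − m_i)! times per(A), where per denotes the permanent. -/

import Mathlib

open MvPolynomial

/-- The permanent of a square matrix. -/
def perMatrix {n : ℕ} {S : Type*} [CommRing S] (M : Matrix (Fin n) (Fin n) S) : S :=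
  ∑ σ : Equiv.Perm (Fin n), ∏ i, M i (σ i)

lemma sum_single_eq {n : ℕ} (g : Fin n → ℕ) :
    ∑ i : Fin n, Finsupp.single i (g i) = Finsupp.equivFunOnFinite.symm g := by
  ext j
  simp [Finsupp.finset_sum_apply, Finsupp.single_apply, Finsupp.equivFunOnFinite]
  rfl

lemma coeff_sum_X_pow {R : Type*} [CommRing R] {n : ℕ} (N : ℕ) (d : Fin n →₀ ℕ)
    (hd : ∑ i, d i = N) :
    MvPolynomial.coeff d ((∑ s : Fin n, X s : MvPolynomial (Fin n) R) ^ N)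
    = (Nat.multinomial Finset.univ (d : Fin n → ℕ) : R) := by
  rw [Finset.sum_pow_eq_sum_piAntidiag, MvPolynomial.coeff_sum]
  have hmon : ∀ f : Fin n → ℕ, (∏ i : Fin n, (X i : MvPolynomial (Fin n) R) ^ f i)
      = monomial (Finsupp.equivFunOnFinite.symm f) 1 := by
    intro f
    simp only [X_pow_eq_monomial]
    rw [← monomial_sum_one, sum_single_eq]
  have hterm : ∀ f : Fin n → ℕ,
      MvPolynomial.coeff d ((Nat.multinomial Finset.univ f : MvPolynomial (Fin n) R) *
        ∏ i : Fin n, (X i : MvPolynomial (Fin n) R) ^ f i)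
      = if Finsupp.equivFunOnFinite.symm f = d then (Nat.multinomial Finset.univ f : R) else 0 := by
    intro f
    rw [hmon, ← MvPolynomial.C_eq_coe_nat, coeff_C_mul, coeff_monomial]
    split <;> simp
  rw [Finset.sum_congr rfl fun f _ => hterm f]
  rw [Finset.sum_eq_single (d : Fin n → ℕ)]
  · simp
  · intro f _ hf
    rw [if_neg]
    intro h
    apply hf
    have := congrArg Finsupp.equivFunOnFinite.symm.symm h
    have h2 : f = Finsupp.equivFunOnFinite d := by simpa using this
    exact h2
  · intro h
    exact absurd (by simp [hd]) h

lemma multinomial_perm {n : ℕ} (g : Fin n → ℕ) (σ : Equiv.Perm (Fin n)) :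
    Nat.multinomial Finset.univ (fun j => g (σ j)) = Nat.multinomial Finset.univ g := by
  unfold Nat.multinomial
  rw [Equiv.sum_comp σ g, Equiv.prod_comp σ (fun i => (g i).factorial)]

/-- Theorem 3.2(ii), equation (3.3). -/
theorem stmt13 {R : Type*} [CommRing R] (n k : ℕ)
    (A : Matrix (Fin n) (Fin n) R) (m : Fin n → ℕ)
    (hmono : Monotone m) (hk : ∀ i, m i ≤ k) :
    MvPolynomial.coeff (Finsupp.equivFunOnFinite.symm fun _ : Fin n => k)
      (perMatrix (Matrix.of fun i j : Fin n => (C (A i j) * X j ^ m i :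
          MvPolynomial (Fin n) R)) *
        (∑ s : Fin n, X s) ^ (k * n - ∑ i, m i))
      = (Nat.multinomial Finset.univ fun i : Fin n => k - m i) • perMatrix A := by
  classical
  set N := k * n - ∑ i, m i with hN
  unfold perMatrix
  rw [Finset.sum_mul, MvPolynomial.coeff_sum]
  have key : ∀ σ : Equiv.Perm (Fin n),
      MvPolynomial.coeff (Finsupp.equivFunOnFinite.symm fun _ : Fin n => k)
        ((∏ i : Fin n, (Matrix.of fun i j : Fin n => (C (A i j) * X j ^ m i :
            MvPolynomial (Fin n) R)) i (σ i)) * (∑ s : Fin n, X s) ^ N)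
      = (Nat.multinomial Finset.univ fun i : Fin n => k - m i) • ∏ i, A i (σ i) := by
    intro σ
    have hprod : (∏ i : Fin n, (Matrix.of fun i j : Fin n => (C (A i j) * X j ^ m i :
        MvPolynomial (Fin n) R)) i (σ i))
        = C (∏ i, A i (σ i)) *
          monomial (Finsupp.equivFunOnFinite.symm fun j => m (σ.symm j)) 1 := by
      simp only [Matrix.of_apply]
      rw [Finset.prod_mul_distrib, ← map_prod]
      congr 1
      simp only [X_pow_eq_monomial]
      rw [← monomial_sum_one]
      have hsum : (∑ i : Fin n, Finsupp.single (σ i) (m i))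
          = Finsupp.equivFunOnFinite.symm fun j => m (σ.symm j) := by
        rw [← sum_single_eq (fun j => m (σ.symm j)),
          ← Equiv.sum_comp σ (fun j => Finsupp.single j (m (σ.symm j)))]
        simp
      rw [hsum]
    have hsplit : (Finsupp.equivFunOnFinite.symm fun _ : Fin n => k)
        = (Finsupp.equivFunOnFinite.symm fun j => m (σ.symm j))
          + Finsupp.equivFunOnFinite.symm fun j => k - m (σ.symm j) := by
      ext j
      simp only [Finsupp.add_apply, Finsupp.coe_equivFunOnFinite_symm]
      have := hk (σ.symm j); omega
    rw [hprod, mul_assoc, coeff_C_mul, hsplit, coeff_monomial_mul, one_mul]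
    rw [coeff_sum_X_pow]
    · have : Nat.multinomial Finset.univ
          ((Finsupp.equivFunOnFinite.symm fun j => k - m (σ.symm j)) : Fin n → ℕ)
          = Nat.multinomial Finset.univ fun i : Fin n => k - m i := by
        have h1 : ((Finsupp.equivFunOnFinite.symm fun j => k - m (σ.symm j)) : Fin n → ℕ)
            = fun j => k - m (σ.symm j) := by ext j; simp [Finsupp.equivFunOnFinite]
        rw [h1]
        exact multinomial_perm (fun i => k - m i) σ.symm
      rw [this]
      simp [nsmul_eq_mul, mul_comm]
    · have h1 : ∑ j : Fin n, ((Finsupp.equivFunOnFinite.symm fun j => k - m (σ.symm j)) j)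
          = ∑ j : Fin n, (k - m (σ.symm j)) := by
        apply Finset.sum_congr rfl; intro j _; simp [Finsupp.equivFunOnFinite]
      rw [h1, Equiv.sum_comp σ.symm (fun i => k - m i),
        Finset.sum_tsub_distrib Finset.univ (fun i _ => hk i)]
      simp [hN, mul_comm k n, Finset.sum_const]
  rw [Finset.sum_congr rfl fun σ _ => key σ, ← Finset.smul_sum]
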